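/- Let t > 0 and z ∈ ℂ with |Im z| < t. Define S(t,z) = Σ_{k=0}^∞ 2·sin(z)/(cosh((2k+1)t) − cos(z)) (the series converges absolutely). Then |S(t,z)| ≤ 4·e^{|Im z|−t} / ((1 − e^{|Im z|−t})²·(1 − e^{2(|Im z|−t)})). -/

import Mathlib

lemma my_abs_sin_le (z : ℂ) : ‖Complex.sin z‖ ≤ Real.exp |z.im| := by
  rw [Complex.sin]
  have h1 : ‖Complex.exp (-(z * Complex.I))‖ = Real.exp z.im := by
    rw [Complex.norm_exp]; congr 1; simp
  have h2 : ‖Complex.exp (z * Complex.I)‖ = Real.exp (-z.im) := by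
    rw [Complex.norm_exp]; congr 1; simp
  calc ‖(Complex.exp (-z * Complex.I) - Complex.exp (z * Complex.I)) * Complex.I / 2‖
      ≤ (Real.exp z.im + Real.exp (-z.im)) / 2 := by
        have hb : ‖Complex.exp (-(z * Complex.I)) - Complex.exp (z * Complex.I)‖
            ≤ Real.exp z.im + Real.exp (-z.im) :=
          le_of_le_of_eq (norm_sub_le _ _) (by rw [h1, h2])
        rw [neg_mul, norm_div, norm_mul, Complex.norm_I, mul_one, Complex.norm_ofNat]
        linarith
    _ ≤ Real.exp |z.im| := by
        have := Real.exp_le_exp.mpr (le_abs_self z.im)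
        have := Real.exp_le_exp.mpr (neg_le_abs z.im)
        linarith

lemma my_abs_cos_le (z : ℂ) : ‖Complex.cos z‖ ≤ Real.cosh |z.im| := by
  rw [Complex.cos]
  have h1 : ‖Complex.exp (-(z * Complex.I))‖ = Real.exp z.im := by
    rw [Complex.norm_exp]; congr 1; simp
  have h2 : ‖Complex.exp (z * Complex.I)‖ = Real.exp (-z.im) := by
    rw [Complex.norm_exp]; congr 1; simp
  rw [Real.cosh_abs, Real.cosh_eq]
  calc ‖(Complex.exp (z * Complex.I) + Complex.exp (-z * Complex.I)) / 2‖
      ≤ (Real.exp (-z.im) + Real.exp z.im) / 2 := by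
        have hb : ‖Complex.exp (z * Complex.I) + Complex.exp (-(z * Complex.I))‖
            ≤ Real.exp (-z.im) + Real.exp z.im :=
          le_of_le_of_eq (norm_add_le _ _) (by rw [h2, h1])
        rw [neg_mul, norm_div, Complex.norm_ofNat]
        linarith
    _ = (Real.exp z.im + Real.exp (-z.im)) / 2 := by ring

lemma my_cosh_lb {a T : ℝ} (ha : 0 ≤ a) (haT : a ≤ T) :
    Real.exp T * (1 - Real.exp (a - T)) ^ 2 / 2 ≤ Real.cosh T - Real.cosh a := by
  rw [Real.cosh_eq, Real.cosh_eq, Real.exp_sub, Real.exp_neg, Real.exp_neg]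
  have hx := Real.exp_pos T
  have hy := Real.exp_pos a
  have h3 : Real.exp a ≤ Real.exp T := Real.exp_le_exp.mpr haT
  have h4 : (1:ℝ) ≤ Real.exp a := Real.one_le_exp ha
  set x := Real.exp T
  set y := Real.exp a
  have key : (y ^ 2 - 1) * (x - y) ≥ 0 :=
    mul_nonneg (by nlinarith) (by linarith)
  rw [div_le_iff₀ (by norm_num : (0:ℝ) < 2)]
  field_simp
  nlinarith [mul_nonneg key (mul_pos hx hx).le, mul_pos hx hy, mul_pos (mul_pos hx hx) hy,
    sq_nonneg (x - y)]

set_option maxHeartbeats 1000000 in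
theorem annulus_kernel_series_bound (t : ℝ) (ht : 0 < t) (z : ℂ) (hz : |z.im| < t) :
    Summable (fun k : ℕ => ‖2 * Complex.sin z /
        ((Real.cosh ((2 * (k : ℝ) + 1) * t) : ℂ) - Complex.cos z)‖) ∧
      ‖∑' k : ℕ, 2 * Complex.sin z /
          ((Real.cosh ((2 * (k : ℝ) + 1) * t) : ℂ) - Complex.cos z)‖ ≤
        4 * Real.exp (|z.im| - t) /
          ((1 - Real.exp (|z.im| - t)) ^ 2 * (1 - Real.exp (2 * (|z.im| - t)))) := by
  set a := |z.im| with ha_def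
  have ha0 : 0 ≤ a := abs_nonneg _
  have hat : a < t := hz
  set r := Real.exp (a - t) with hr_def
  have hr0 : 0 < r := Real.exp_pos _
  have hr1 : r < 1 := by
    rw [hr_def]
    exact Real.exp_lt_one_iff.mpr (by linarith)
  set q := Real.exp (-(2 * t)) with hq_def
  have hq0 : 0 < q := Real.exp_pos _
  have hq1 : q < 1 := by
    rw [hq_def]
    exact Real.exp_lt_one_iff.mpr (by linarith)
  have hr2 : Real.exp (2 * (a - t)) = r ^ 2 := by
    rw [hr_def, sq, ← Real.exp_add]; ring_nf
  have hqr : q ≤ r ^ 2 := by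
    rw [← hr2, hq_def]
    exact Real.exp_le_exp.mpr (by linarith)
  set C := 4 * r / (1 - r) ^ 2 with hC_def
  have hC0 : 0 ≤ C := by positivity
  -- termwise bound
  have key : ∀ k : ℕ, ‖2 * Complex.sin z /
      ((Real.cosh ((2 * (k : ℝ) + 1) * t) : ℂ) - Complex.cos z)‖ ≤ C * q ^ k := by
    intro k
    set T := (2 * (k : ℝ) + 1) * t with hT_def
    have hkT : t ≤ T := by
      rw [hT_def]
      nlinarith [Nat.cast_nonneg (α := ℝ) k]
    have haT : a ≤ T := le_of_lt (lt_of_lt_of_le hat hkT)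
    have hrq : Real.exp (a - T) = r * q ^ k := by
      rw [hr_def, hq_def, ← Real.exp_nat_mul, ← Real.exp_add]
      congr 1
      rw [hT_def]; push_cast; ring
    have hrqk : r * q ^ k ≤ r := by
      nlinarith [pow_le_one₀ hq0.le hq1.le (n := k), pow_nonneg hq0.le k]
    have hrqk0 : 0 ≤ r * q ^ k := by positivity
    -- denominator lower bound
    have hden1 : Real.cosh T - Real.cosh a ≤
        ‖(Real.cosh T : ℂ) - Complex.cos z‖ := by
      have h1 : ‖(Real.cosh T : ℂ)‖ = Real.cosh T := by
        rw [Complex.norm_real, Real.norm_eq_abs, abs_of_pos (Real.cosh_pos T)]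
      have h2 : ‖Complex.cos z‖ ≤ Real.cosh a := my_abs_cos_le z
      have h3 := norm_sub_norm_le ((Real.cosh T : ℂ)) (Complex.cos z)
      linarith
    have hden2 : Real.exp T * (1 - r) ^ 2 / 2 ≤
        ‖(Real.cosh T : ℂ) - Complex.cos z‖ := by
      have h4 := my_cosh_lb ha0 haT
      rw [hrq] at h4
      have h5 : Real.exp T * (1 - r) ^ 2 / 2 ≤ Real.exp T * (1 - r * q ^ k) ^ 2 / 2 := by
        have : (1 - r) ^ 2 ≤ (1 - r * q ^ k) ^ 2 := by nlinarith
        nlinarith [Real.exp_pos T]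
      linarith
    have h1r : 0 < 1 - r := by linarith
    have hdenpos : 0 < Real.exp T * (1 - r) ^ 2 / 2 :=
      div_pos (mul_pos (Real.exp_pos T) (pow_pos h1r 2)) two_pos
    -- numerator bound
    have hnum : ‖2 * Complex.sin z‖ ≤ 2 * Real.exp a := by
      rw [norm_mul, Complex.norm_ofNat]
      have := my_abs_sin_le z
      linarith
    rw [norm_div]
    calc ‖2 * Complex.sin z‖ /
          ‖(Real.cosh T : ℂ) - Complex.cos z‖
        ≤ 2 * Real.exp a / (Real.exp T * (1 - r) ^ 2 / 2) := by
          apply div_le_div₀ (by positivity) hnum hdenpos hden2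
      _ = C * q ^ k := by
          have hea : Real.exp a = r * q ^ k * Real.exp T := by
            rw [← hrq, ← Real.exp_add]; ring_nf
          rw [hC_def, hea]
          have h1 : (1 - r) ^ 2 ≠ 0 := ne_of_gt (pow_pos h1r 2)
          field_simp
          ring
  -- summability
  have hgeo : Summable (fun k : ℕ => C * q ^ k) :=
    (summable_geometric_of_lt_one hq0.le hq1).mul_left C
  have hsum : Summable (fun k : ℕ => ‖2 * Complex.sin z /
      ((Real.cosh ((2 * (k : ℝ) + 1) * t) : ℂ) - Complex.cos z)‖) :=
    Summable.of_nonneg_of_le (fun k => norm_nonneg _) key hgeo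
  refine ⟨hsum, ?_⟩
  have hr2pos : 0 < 1 - r ^ 2 := by nlinarith
  have hqpos : 0 < 1 - q := by linarith
  calc ‖∑' k : ℕ, 2 * Complex.sin z /
          ((Real.cosh ((2 * (k : ℝ) + 1) * t) : ℂ) - Complex.cos z)‖
      ≤ ∑' k : ℕ, ‖2 * Complex.sin z /
          ((Real.cosh ((2 * (k : ℝ) + 1) * t) : ℂ) - Complex.cos z)‖ := by
        have h := norm_tsum_le_tsum_norm
          (f := fun k : ℕ => 2 * Complex.sin z /
            ((Real.cosh ((2 * (k : ℝ) + 1) * t) : ℂ) - Complex.cos z))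
          hsum
        exact h
    _ ≤ ∑' k : ℕ, C * q ^ k := Summable.tsum_le_tsum key hsum hgeo
    _ = C * (1 - q)⁻¹ := by
        rw [tsum_mul_left, tsum_geometric_of_lt_one hq0.le hq1]
    _ = 4 * r / ((1 - r) ^ 2 * (1 - q)) := by
        rw [hC_def]; field_simp
    _ ≤ 4 * r / ((1 - r) ^ 2 * (1 - r ^ 2)) := by
        have hp : 0 < (1 - r) ^ 2 * (1 - r ^ 2) := mul_pos (pow_pos (by linarith) 2) hr2pos
        apply div_le_div_of_nonneg_left (by positivity) hp
        have h2 : (1 - r) ^ 2 * (1 - r ^ 2) ≤ (1 - r) ^ 2 * (1 - q) := by nlinarith [pow_pos (show (0:ℝ) < 1 - r by linarith) 2]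
        exact h2
    _ = 4 * Real.exp (a - t) / ((1 - Real.exp (a - t)) ^ 2 * (1 - Real.exp (2 * (a - t)))) := by
        rw [hr2]
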